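/- In the dynamic network creation game in which players' communication cost uses the temporal shortest distance, for every real atomic cost α with 1 ≤ α < 2 and every number of players n ≥ 2, we have 1 ≤ PoS(α, n) ≤ PoA(α, n) ≤ 4/3. -/

import Mathlib

open scoped ENNReal BigOperators

/-- A temporal path from `u` to `v`, given as a list of steps `(next vertex, time label)`.
The labelling `lab` gives, for each (ordered) pair of vertices, the set of time labels of the
edge joining them (empty if there is no edge); it is symmetric for temporal graphs arising
from strategy profiles.  The conditions say that consecutive steps use time labels belonging
to the corresponding edge, that time labels strictly increase along the path, that no vertex is
repeated, and that the path ends at `v`. -/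
def IsTemporalPath {V : Type*} (lab : V → V → Set ℕ) (u v : V) (p : List (V × ℕ)) : Prop :=
  List.Chain (fun a b => b.2 ∈ lab a.1 b.1) (u, 0) p ∧
  List.Chain' (· < ·) (p.map Prod.snd) ∧
  (u :: p.map Prod.fst).Nodup ∧
  (u :: p.map Prod.fst).getLast (List.cons_ne_nil _ _) = v

/-- The temporal shortest distance from `u` to `v`: the least number of edges of a temporal
path from `u` to `v` (`0` if `u = v`, `⊤` if there is no temporal path). -/
noncomputable def temporalDist {V : Type*} (lab : V → V → Set ℕ) (u v : V) : ℕ∞ :=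
  sInf {n : ℕ∞ | ∃ p : List (V × ℕ), IsTemporalPath lab u v p ∧ (p.length : ℕ∞) = n}

/-- The labelling of the communication temporal graph `𝒢[s]` of a strategy profile `s`:
`t` is a label of the edge `uv` iff `(u, t) ∈ s v` or `(v, t) ∈ s u`. -/
def profLab {V : Type*} (s : V → Finset (V × ℕ)) : V → V → Set ℕ :=
  fun u v => {t | (u, t) ∈ s v ∨ (v, t) ∈ s u}

/-- The (finite) set of time labels of the edge `uv` in the communication temporal graph. -/
def labelFinset {V : Type*} [DecidableEq V] (s : V → Finset (V × ℕ)) (u v : V) : Finset ℕ :=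
  (((s v).filter (fun p => p.1 = u)).image Prod.snd) ∪
    (((s u).filter (fun p => p.1 = v)).image Prod.snd)

/-- The total number of time labels `∑ e ∈ E, |λ(e)|` of the communication temporal graph
(each unordered pair is counted once, whence the division by `2`). -/
def numLabels {V : Type*} [Fintype V] [DecidableEq V] (s : V → Finset (V × ℕ)) : ℕ :=
  (∑ u : V, ∑ v : V, if u = v then 0 else (labelFinset s u v).card) / 2

/-- The number of edges `|E|` of the communication temporal graph. -/
def numEdges {V : Type*} [Fintype V] [DecidableEq V] (s : V → Finset (V × ℕ)) : ℕ :=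
  ((Finset.univ : Finset (V × V)).filter
    (fun q => q.1 ≠ q.2 ∧ (labelFinset s q.1 q.2).Nonempty)).card / 2

/-- The social cost `c[s] = α·∑_{e ∈ E} |λ(e)| + ∑_{(u,v) ∈ V×V} d_{𝒢[s]}(u,v)`
of a strategy profile `s` for atomic cost `α`. -/
noncomputable def socialCost {V : Type*} [Fintype V] [DecidableEq V]
    (α : ℝ) (s : V → Finset (V × ℕ)) : ℝ≥0∞ :=
  ENNReal.ofReal α * (numLabels s : ℝ≥0∞) +
    ∑ u : V, ∑ v : V, (temporalDist (profLab s) u v : ℝ≥0∞)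

/-- The individual cost `c[s](v) = α·|s(v)| + ∑_{w ∈ V} d_{𝒢[s]}(v,w)` of player `v`. -/
noncomputable def indivCost {V : Type*} [Fintype V]
    (α : ℝ) (s : V → Finset (V × ℕ)) (v : V) : ℝ≥0∞ :=
  ENNReal.ofReal α * ((s v).card : ℝ≥0∞) +
    ∑ w : V, (temporalDist (profLab s) v w : ℝ≥0∞)

/-- A strategy profile is a Nash equilibrium if no player can strictly decrease its individual
cost by changing only its own strategy. -/
def IsNash {V : Type*} [Fintype V] [DecidableEq V] (α : ℝ) (s : V → Finset (V × ℕ)) : Prop :=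
  ∀ (v : V) (t : Finset (V × ℕ)),
    ¬ indivCost α (Function.update s v t) v < indivCost α s v

/-- The optimal social cost `c*(α, n)`: the minimum social cost over all strategy profiles
with `n` players and atomic cost `α`. -/
noncomputable def optCost (α : ℝ) (n : ℕ) : ℝ≥0∞ :=
  ⨅ s : Fin n → Finset (Fin n × ℕ), socialCost α s

/-- The price of anarchy `PoA(α, n)`: the maximum social cost of a Nash equilibrium with `n`
players and atomic cost `α`, divided by the optimal social cost `c*(α, n)`. -/
noncomputable def PoA (α : ℝ) (n : ℕ) : ℝ≥0∞ :=
  (⨆ s : {s : Fin n → Finset (Fin n × ℕ) // IsNash α s}, socialCost α s.1) / optCost α n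

/-- The price of stability `PoS(α, n)`: the minimum social cost of a Nash equilibrium with `n`
players and atomic cost `α`, divided by the optimal social cost `c*(α, n)`. -/
noncomputable def PoS (α : ℝ) (n : ℕ) : ℝ≥0∞ :=
  (⨅ s : {s : Fin n → Finset (Fin n × ℕ) // IsNash α s}, socialCost α s.1) / optCost α n

section basics
variable {V : Type*} {lab lab' : V → V → Set ℕ} {u v : V}

lemma isTemporalPath_mono (h : ∀ x y, lab x y ⊆ lab' x y) {p : List (V × ℕ)}
    (hp : IsTemporalPath lab u v p) : IsTemporalPath lab' u v p :=
  ⟨List.Chain.imp (fun a b hb => h _ _ hb) hp.1, hp.2.1, hp.2.2.1, hp.2.2.2⟩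

lemma temporalDist_le_length {p : List (V × ℕ)} (hp : IsTemporalPath lab u v p) :
    temporalDist lab u v ≤ (p.length : ℕ∞) := sInf_le ⟨p, hp, rfl⟩

lemma temporalDist_mono (h : ∀ x y, lab x y ⊆ lab' x y) :
    temporalDist lab' u v ≤ temporalDist lab u v :=
  sInf_le_sInf (fun n hn => by
    obtain ⟨p, hp, h2⟩ := hn
    exact ⟨p, isTemporalPath_mono h hp, h2⟩)

lemma temporalDist_self (lab : V → V → Set ℕ) (u : V) : temporalDist lab u u = 0 := by
  refine le_antisymm ?_ zero_le
  have h : IsTemporalPath lab u u [] := ⟨List.Chain.nil, by simp [List.Chain'], by simp, by simp⟩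
  simpa using temporalDist_le_length h

lemma one_le_temporalDist (h : u ≠ v) : 1 ≤ temporalDist lab u v := by
  refine le_sInf ?_
  rintro n ⟨p, ⟨_, _, _, hlast⟩, rfl⟩
  cases p with
  | nil => simp at hlast; exact absurd hlast h
  | cons a q =>
      simp only [List.length_cons]
      exact_mod_cast Nat.succ_le_succ (Nat.zero_le _)

lemma temporalDist_le_one (h : u ≠ v) {τ : ℕ} (ht : τ ∈ lab u v) :
    temporalDist lab u v ≤ 1 := by
  have hp : IsTemporalPath lab u v [(v, τ)] := by
    refine ⟨List.chain_cons.mpr ⟨ht, List.Chain.nil⟩, by simp [List.Chain'], by simp [h], by simp⟩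
  simpa using temporalDist_le_length hp

lemma two_le_temporalDist (h : u ≠ v) (hno : ∀ τ : ℕ, τ ∉ lab u v) :
    2 ≤ temporalDist lab u v := by
  refine le_sInf ?_
  rintro n ⟨p, ⟨hc, _, _, hlast⟩, rfl⟩
  match p, hc, hlast with
  | [], _, hlast => simp at hlast; exact absurd hlast h
  | [a], hc, hlast =>
      have h1 : a.2 ∈ lab u a.1 := (List.chain_cons.mp hc).1
      have ha : a.1 = v := by simpa using hlast
      rw [ha] at h1
      exact absurd h1 (hno _)
  | a :: b :: q, _, _ =>
      simp only [List.length_cons]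
      exact_mod_cast by omega
end basics

section proflab
variable {V : Type*} {u v : V}

lemma mem_profLab {s : V → Finset (V × ℕ)} {τ : ℕ} :
    τ ∈ profLab s u v ↔ (u, τ) ∈ s v ∨ (v, τ) ∈ s u := Iff.rfl

lemma profLab_symm (s : V → Finset (V × ℕ)) (u v : V) : profLab s u v = profLab s v u :=
  Set.ext fun _ => or_comm

lemma mem_labelFinset [DecidableEq V] {s : V → Finset (V × ℕ)} {τ : ℕ} :
    τ ∈ labelFinset s u v ↔ τ ∈ profLab s u v := by
  simp only [labelFinset, profLab, Finset.mem_union, Finset.mem_image, Finset.mem_filter,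
    Set.mem_setOf_eq]
  constructor
  · rintro (⟨p, ⟨hp, h1⟩, h2⟩ | ⟨p, ⟨hp, h1⟩, h2⟩)
    · left; rw [← h1, ← h2]; exact hp
    · right; rw [← h1, ← h2]; exact hp
  · rintro (h | h)
    · exact Or.inl ⟨(u, τ), ⟨h, rfl⟩, rfl⟩
    · exact Or.inr ⟨(v, τ), ⟨h, rfl⟩, rfl⟩

lemma labelFinset_symm [DecidableEq V] (s : V → Finset (V × ℕ)) (u v : V) :
    labelFinset s u v = labelFinset s v u := by
  rw [labelFinset, labelFinset, Finset.union_comm]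

lemma profLab_update_subset [DecidableEq V] (s : V → Finset (V × ℕ)) (v₀ : V)
    (t : Finset (V × ℕ)) (h : s v₀ ⊆ t) (x y : V) :
    profLab s x y ⊆ profLab (Function.update s v₀ t) x y := by
  intro τ hτ
  rcases hτ with h1 | h1
  · left
    by_cases hy : y = v₀
    · subst hy; rw [Function.update_self]; exact h h1
    · rwa [Function.update_of_ne hy]
  · right
    by_cases hx : x = v₀
    · subst hx; rw [Function.update_self]; exact h h1
    · rwa [Function.update_of_ne hx]

lemma profLab_update_of_ne [DecidableEq V] (s : V → Finset (V × ℕ)) (v₀ : V)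
    (t : Finset (V × ℕ)) {x y : V} (hx : x ≠ v₀) (hy : y ≠ v₀) :
    profLab (Function.update s v₀ t) x y = profLab s x y := by
  simp [profLab, Function.update_of_ne hx, Function.update_of_ne hy]

lemma surgery [DecidableEq V] {s : V → Finset (V × ℕ)} {u v : V} (huv : u ≠ v) {t1 t2 : ℕ}
    (h1 : t1 ∈ profLab s u v) (h12 : t1 < t2) (x : V) :
    temporalDist (profLab (Function.update s u ((s u).erase (v, t2)))) u x ≤
      temporalDist (profLab s) u x := by
  set s' := Function.update s u ((s u).erase (v, t2)) with hs'
  have hs'u : s' u = (s u).erase (v, t2) := Function.update_self _ _ _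
  have hs'o : ∀ y, y ≠ u → s' y = s y := fun y hy => Function.update_of_ne hy _ _
  have labo : ∀ a b : V, a ≠ u → b ≠ u → profLab s' a b = profLab s a b := by
    intro a b ha hb
    simp [profLab, hs'o a ha, hs'o b hb]
  have labu : ∀ (b : V) (τ : ℕ), b ≠ u → τ ∈ profLab s u b → (b, τ) ≠ (v, t2) →
      τ ∈ profLab s' u b := by
    intro b τ hb hτ hne
    rcases hτ with hl | hl
    · left; rw [hs'o b hb]; exact hl
    · right; rw [hs'u]; exact Finset.mem_erase.mpr ⟨hne, hl⟩
  have labt1 : t1 ∈ profLab s' u v :=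
    labu v t1 (Ne.symm huv) h1 (by simp [h12.ne])
  refine le_sInf ?_
  rintro n ⟨p, ⟨hc, hinc, hnd, hlast⟩, rfl⟩
  cases p with
  | nil => exact sInf_le ⟨[], ⟨List.Chain.nil, by simp [List.Chain'], hnd, hlast⟩, rfl⟩
  | cons a q =>
      obtain ⟨hrel, hchain⟩ := List.chain_cons.mp hc
      have hndq : u ∉ (a.1 :: q.map Prod.fst) := by
        have h := hnd
        simp only [List.map_cons] at h
        exact (List.nodup_cons.mp h).1
      have hau : a.1 ≠ u := fun h => hndq (by simp [h])
      have hqu : ∀ b ∈ q, b.1 ≠ u := by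
        intro b hb hbe
        exact hndq (by
          simp only [List.mem_cons]
          exact Or.inr (hbe ▸ List.mem_map_of_mem (f := Prod.fst) hb))
      have tail : ∀ (q' : List (V × ℕ)) (c c' : V × ℕ), c.1 = c'.1 → c.1 ≠ u →
          (∀ b ∈ q', b.1 ≠ u) →
          List.Chain (fun a b => b.2 ∈ profLab s a.1 b.1) c q' →
          List.Chain (fun a b => b.2 ∈ profLab s' a.1 b.1) c' q' := by
        intro q'
        induction q' with
        | nil => intro _ _ _ _ _ _; exact List.Chain.nil
        | cons b q'' ih =>
            intro c c' hcc hcu hq' hch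
            obtain ⟨hr, hch'⟩ := List.chain_cons.mp hch
            refine List.chain_cons.mpr ⟨?_, ih b b rfl (hq' b List.mem_cons_self)
              (fun x hx => hq' x (List.mem_cons_of_mem _ hx)) hch'⟩
            rw [← hcc, labo c.1 b.1 hcu (hq' b List.mem_cons_self)]
            exact hr
      by_cases hsp : a.1 = v ∧ a.2 = t2
      · refine sInf_le ⟨(a.1, t1) :: q, ⟨?_, ?_, ?_, ?_⟩, ?_⟩
        · refine List.chain_cons.mpr ⟨?_, tail q a (a.1, t1) rfl hau hqu hchain⟩
          show t1 ∈ profLab s' u a.1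
          rw [hsp.1]; exact labt1
        · simp only [List.map_cons]
          simp only [List.map_cons] at hinc
          cases hq : q.map Prod.snd with
          | nil => simp [List.Chain']
          | cons m l =>
              rw [hq] at hinc
              obtain ⟨hlt, h'⟩ := List.isChain_cons_cons.mp hinc
              exact List.isChain_cons_cons.mpr ⟨lt_trans (by rw [hsp.2]; exact h12) hlt, h'⟩
        · exact hnd
        · exact hlast
        · simp
      · have hne : (a.1, a.2) ≠ (v, t2) := by
          intro h
          exact hsp ⟨congrArg Prod.fst h, congrArg Prod.snd h⟩
        exact sInf_le ⟨a :: q, ⟨List.chain_cons.mpr ⟨labu a.1 a.2 hau hrel hne,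
          tail q a a rfl hau hqu hchain⟩, hinc, hnd, hlast⟩, rfl⟩
end proflab

def Pset (n : ℕ) : Finset (Fin n × Fin n) :=
  Finset.univ.filter (fun p => p.1 < p.2)

lemma pair_sum {M : Type*} [AddCommMonoid M] {n : ℕ} (f : Fin n → Fin n → M)
    (hs : ∀ u v, f u v = f v u) (hd : ∀ u, f u u = 0) :
    ∑ u : Fin n, ∑ v : Fin n, f u v =
      (∑ p ∈ Pset n, f p.1 p.2) + ∑ p ∈ Pset n, f p.1 p.2 := by
  classical
  rw [← Finset.sum_product']
  rw [← Finset.sum_filter_add_sum_filter_not (Finset.univ ×ˢ Finset.univ)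
    (fun p : Fin n × Fin n => p.1 < p.2) (fun p => f p.1 p.2)]
  rw [Finset.univ_product_univ]
  congr 1
  have step1 : ∑ p ∈ Finset.univ.filter (fun p : Fin n × Fin n => ¬ p.1 < p.2), f p.1 p.2
      = ∑ p ∈ Finset.univ.filter (fun p : Fin n × Fin n => p.2 < p.1), f p.1 p.2 := by
    refine (Finset.sum_subset ?_ ?_).symm
    · intro p hp
      simp only [Finset.mem_filter, Finset.mem_univ, true_and] at hp ⊢
      exact asymm hp
    · intro p hp hnp
      simp only [Finset.mem_filter, Finset.mem_univ, true_and] at hp hnp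
      have h2 : p.2 = p.1 := le_antisymm (not_lt.mp hp) (not_lt.mp hnp)
      rw [h2]
      exact hd p.1
  rw [step1]
  refine Finset.sum_nbij' Prod.swap Prod.swap ?_ ?_ ?_ ?_ ?_
  · intro p hp
    simp only [Finset.mem_filter, Finset.mem_univ, true_and, Pset] at hp ⊢
    exact hp
  · intro p hp
    simp only [Finset.mem_filter, Finset.mem_univ, true_and, Pset] at hp ⊢
    exact hp
  · intro p _; exact Prod.swap_swap p
  · intro p _; exact Prod.swap_swap p
  · intro p _; exact hs p.1 p.2

def sK (n : ℕ) : Fin n → Finset (Fin n × ℕ) :=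
  fun v => (Finset.univ.filter (fun w => v < w)).image (fun w => (w, (0:ℕ)))

lemma mem_sK {n : ℕ} {v w : Fin n} {τ : ℕ} : (w, τ) ∈ sK n v ↔ v < w ∧ τ = 0 := by
  simp only [sK, Finset.mem_image, Finset.mem_filter, Finset.mem_univ, true_and,
    Prod.mk.injEq]
  constructor
  · rintro ⟨x, hx, rfl, rfl⟩; exact ⟨hx, rfl⟩
  · rintro ⟨h, rfl⟩; exact ⟨w, h, rfl, rfl⟩

lemma mem_profLab_sK {n : ℕ} {u v : Fin n} {τ : ℕ} :
    τ ∈ profLab (sK n) u v ↔ τ = 0 ∧ u ≠ v := by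
  rw [mem_profLab, mem_sK, mem_sK]
  constructor
  · rintro (⟨h, rfl⟩ | ⟨h, rfl⟩)
    · exact ⟨rfl, h.ne'⟩
    · exact ⟨rfl, h.ne⟩
  · rintro ⟨rfl, hne⟩
    rcases hne.lt_or_gt with h | h
    · exact Or.inr ⟨h, rfl⟩
    · exact Or.inl ⟨h, rfl⟩

lemma sK_nash {α : ℝ} (hα : 0 ≤ α) (n : ℕ) : IsNash α (sK n) := by
  intro v t
  rw [not_lt]
  classical
  set s' := Function.update (sK n) v t with hs'
  set A : Finset (Fin n) := Finset.univ.filter (fun w => w < v) with hA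
  set B : Finset (Fin n) := t.image Prod.fst with hB
  have lab0 : ∀ (a b : Fin n) (τ : ℕ), a ≠ v → b ≠ v → τ ∈ profLab s' a b → τ = 0 := by
    intro a b τ ha hb hτ
    rw [hs', profLab_update_of_ne _ _ _ ha hb] at hτ
    exact (mem_profLab_sK.mp hτ).1
  have key2 : ∀ (w : Fin n) (p : List (Fin n × ℕ)),
      IsTemporalPath (profLab s') v w p → p.length ≤ 1 := by
    rintro w p ⟨hc, hinc, hnd, _⟩
    by_contra hlen
    obtain _ | ⟨a, _ | ⟨b, q⟩⟩ := p
    · simp at hlen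
    · simp at hlen
    · obtain ⟨h1, hc2⟩ := List.chain_cons.mp hc
      obtain ⟨h2, _⟩ := List.chain_cons.mp hc2
      have hv : v ∉ a.1 :: b.1 :: q.map Prod.fst := by
        have h := hnd
        simp only [List.map_cons] at h
        exact (List.nodup_cons.mp h).1
      have hav : a.1 ≠ v := by intro h; exact hv (by simp [h])
      have hbv : b.1 ≠ v := by intro h; exact hv (by simp [h])
      have hb0 : b.2 = 0 := lab0 _ _ _ hav hbv h2
      have hlt : a.2 < b.2 := by
        simp only [List.map_cons] at hinc
        exact (List.isChain_cons_cons.mp hinc).1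
      omega
  have key3 : ∀ w : Fin n, w ∉ A → w ∉ B → w ≠ v →
      temporalDist (profLab s') v w = ⊤ := by
    intro w hwA hwB hwv
    have hempty : {m : ℕ∞ | ∃ p, IsTemporalPath (profLab s') v w p ∧ (p.length : ℕ∞) = m}
        = ∅ := by
      rw [Set.eq_empty_iff_forall_notMem]
      rintro m ⟨p, hp, rfl⟩
      have hlen := key2 w p hp
      obtain ⟨hc, _, _, hlast⟩ := hp
      obtain _ | ⟨a, _ | ⟨b, q⟩⟩ := p
      · have hh : v = w := by simpa using hlast
        exact hwv hh.symm
      · have ha : a.1 = w := by simpa using hlast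
        have h1 : a.2 ∈ profLab s' v a.1 := (List.chain_cons.mp hc).1
        rw [ha] at h1
        rcases h1 with h | h
        · rw [hs', Function.update_of_ne hwv] at h
          exact hwA (by simp [hA, (mem_sK.mp h).1])
        · rw [hs', Function.update_self] at h
          exact hwB (Finset.mem_image.mpr ⟨(w, a.2), h, rfl⟩)
      · simp at hlen
    rw [temporalDist, hempty, sInf_empty]
  by_cases hcov : ∀ w : Fin n, w ≠ v → w ∈ A ∪ B
  · -- covered case: t is at least as big as sK n v
    have hsub : Finset.univ.filter (fun w => v < w) ⊆ B := by
      intro w hw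
      have hvw : v < w := (Finset.mem_filter.mp hw).2
      rcases Finset.mem_union.mp (hcov w hvw.ne') with h | h
      · exact absurd (Finset.mem_filter.mp h).2 (asymm hvw)
      · exact h
    have hcardt : (sK n v).card ≤ t.card := by
      have h1 : (sK n v).card = (Finset.univ.filter (fun w => v < w)).card := by
        rw [sK]
        exact Finset.card_image_of_injective _ (fun a b h => congrArg Prod.fst h)
      calc (sK n v).card = _ := h1
        _ ≤ B.card := Finset.card_le_card hsub
        _ ≤ t.card := Finset.card_image_le
    have hup : ∑ w : Fin n, (temporalDist (profLab (sK n)) v w : ℝ≥0∞)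
        ≤ ((Finset.univ.erase v).card : ℝ≥0∞) := by
      rw [← Finset.sum_erase_add _ _ (Finset.mem_univ v), temporalDist_self]
      simp only [ENat.toENNReal_zero, add_zero]
      calc ∑ w ∈ Finset.univ.erase v, (temporalDist (profLab (sK n)) v w : ℝ≥0∞)
          ≤ ∑ _w ∈ Finset.univ.erase v, (1 : ℝ≥0∞) := by
            refine Finset.sum_le_sum fun w hw => ?_
            have hwv : w ≠ v := Finset.ne_of_mem_erase hw
            have := temporalDist_le_one (lab := profLab (sK n)) hwv.symm
              (mem_profLab_sK.mpr ⟨rfl, hwv.symm⟩)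
            exact_mod_cast this
        _ = ((Finset.univ.erase v).card : ℝ≥0∞) := by simp
    have hlow : ((Finset.univ.erase v).card : ℝ≥0∞)
        ≤ ∑ w : Fin n, (temporalDist (profLab s') v w : ℝ≥0∞) := by
      rw [← Finset.sum_erase_add _ _ (Finset.mem_univ v)]
      calc ((Finset.univ.erase v).card : ℝ≥0∞)
          = ∑ _w ∈ Finset.univ.erase v, (1 : ℝ≥0∞) := by simp
        _ ≤ ∑ w ∈ Finset.univ.erase v, (temporalDist (profLab s') v w : ℝ≥0∞) := by
            refine Finset.sum_le_sum fun w hw => ?_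
            have hwv : w ≠ v := Finset.ne_of_mem_erase hw
            have := one_le_temporalDist (lab := profLab s') hwv.symm
            exact_mod_cast this
        _ ≤ _ := le_self_add
    rw [indivCost, indivCost]
    have hs'v : s' v = t := by rw [hs']; exact Function.update_self _ _ _
    rw [hs'v]
    calc ENNReal.ofReal α * ((sK n v).card : ℝ≥0∞)
          + ∑ w : Fin n, (temporalDist (profLab (sK n)) v w : ℝ≥0∞)
        ≤ ENNReal.ofReal α * (t.card : ℝ≥0∞) + ((Finset.univ.erase v).card : ℝ≥0∞) := by
          refine add_le_add (mul_le_mul_right ?_ _) hup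
          exact_mod_cast hcardt
      _ ≤ ENNReal.ofReal α * (t.card : ℝ≥0∞)
          + ∑ w : Fin n, (temporalDist (profLab s') v w : ℝ≥0∞) := add_le_add_right hlow _
  · -- uncovered case: some vertex unreachable, deviation cost is ⊤
    push_neg at hcov
    obtain ⟨w, hwv, hw⟩ := hcov
    rw [Finset.mem_union] at hw
    push_neg at hw
    have htop : temporalDist (profLab s') v w = ⊤ := key3 w hw.1 hw.2 hwv
    have : indivCost α (Function.update (sK n) v t) v = ⊤ := by
      rw [indivCost]
      refine ENNReal.add_eq_top.mpr (Or.inr ?_)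
      refine ENNReal.sum_eq_top.mpr ⟨w, Finset.mem_univ w, ?_⟩
      rw [← hs', htop]
      simp
    rw [this]
    exact le_top

lemma nash_dist_le_two {α : ℝ} (hα1 : 1 ≤ α) (hα2 : α < 2) {n : ℕ}
    {s : Fin n → Finset (Fin n × ℕ)} (hN : IsNash α s) (v w : Fin n) :
    temporalDist (profLab s) v w ≤ 2 := by
  by_contra hw
  classical
  set F : Finset (Fin n) :=
    Finset.univ.filter (fun x => ¬ temporalDist (profLab s) v x ≤ 2) with hF
  set G : Finset (Fin n) :=
    Finset.univ.filter (fun x => temporalDist (profLab s) v x ≤ 2) with hG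
  have hwF : w ∈ F := by
    rw [hF, Finset.mem_filter]
    exact ⟨Finset.mem_univ w, hw⟩
  set t : Finset (Fin n × ℕ) := s v ∪ F.image (fun x => (x, 0)) with ht
  set s' := Function.update s v t with hs'
  have hsub : ∀ x y, profLab s x y ⊆ profLab s' x y :=
    profLab_update_subset s v t Finset.subset_union_left
  have hd' : ∀ x, temporalDist (profLab s') v x ≤ temporalDist (profLab s) v x :=
    fun x => temporalDist_mono hsub
  have hdF : ∀ x ∈ F, (temporalDist (profLab s') v x : ℝ≥0∞) ≤ 1 := by
    intro x hx
    have hxv : x ≠ v := by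
      intro h; subst h
      simp [hF, temporalDist_self] at hx
    have h0 : (0 : ℕ) ∈ profLab s' v x := by
      refine Or.inr ?_
      have : s' v = t := by rw [hs']; exact Function.update_self _ _ _
      rw [this, ht]
      exact Finset.mem_union_right _ (Finset.mem_image_of_mem _ hx)
    have := temporalDist_le_one hxv.symm h0
    exact_mod_cast this
  have hNash : indivCost α s v ≤ indivCost α (Function.update s v t) v := not_lt.mp (hN v t)
  rw [indivCost, indivCost] at hNash
  rw [Function.update_self] at hNash
  have hsplit : ∀ (s₀ : Fin n → Finset (Fin n × ℕ)),
      ∑ x : Fin n, (temporalDist (profLab s₀) v x : ℝ≥0∞)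
      = ∑ x ∈ G, (temporalDist (profLab s₀) v x : ℝ≥0∞)
        + ∑ x ∈ F, (temporalDist (profLab s₀) v x : ℝ≥0∞) := by
    intro s₀
    rw [hG, hF]
    exact (Finset.sum_filter_add_sum_filter_not Finset.univ _ _).symm
  rw [hsplit s, hsplit (Function.update s v t)] at hNash
  have hcardt : (t.card : ℝ≥0∞) ≤ (s v).card + F.card := by
    have := le_trans (Finset.card_union_le (s v) (F.image (fun x => (x, (0:ℕ)))))
      (add_le_add_right Finset.card_image_le _)
    exact_mod_cast this
  have hGne : ∑ x ∈ G, (temporalDist (profLab s) v x : ℝ≥0∞) ≠ ⊤ := by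
    have hle : ∑ x ∈ G, (temporalDist (profLab s) v x : ℝ≥0∞) ≤ ∑ _x ∈ G, (2 : ℝ≥0∞) := by
      refine Finset.sum_le_sum fun x hx => ?_
      have hx2 : temporalDist (profLab s) v x ≤ 2 := (Finset.mem_filter.mp hx).2
      exact_mod_cast hx2
    have h2 : ∑ _x ∈ G, (2 : ℝ≥0∞) ≠ ⊤ :=
      (ENNReal.sum_lt_top.mpr (fun _ _ => by norm_num)).ne
    exact ne_top_of_le_ne_top h2 hle
  have hRHS : ENNReal.ofReal α * (t.card : ℝ≥0∞)
      + (∑ x ∈ G, (temporalDist (profLab (Function.update s v t)) v x : ℝ≥0∞)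
        + ∑ x ∈ F, (temporalDist (profLab (Function.update s v t)) v x : ℝ≥0∞))
      ≤ (ENNReal.ofReal α * ((s v).card : ℝ≥0∞)
          + ∑ x ∈ G, (temporalDist (profLab s) v x : ℝ≥0∞))
        + (ENNReal.ofReal α + 1) * (F.card : ℝ≥0∞) := by
    have h1 : ENNReal.ofReal α * (t.card : ℝ≥0∞)
        ≤ ENNReal.ofReal α * ((s v).card : ℝ≥0∞) + ENNReal.ofReal α * (F.card : ℝ≥0∞) := by
      rw [← mul_add]
      exact mul_le_mul_right hcardt _
    have h2 : ∑ x ∈ G, (temporalDist (profLab (Function.update s v t)) v x : ℝ≥0∞)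
        ≤ ∑ x ∈ G, (temporalDist (profLab s) v x : ℝ≥0∞) :=
      Finset.sum_le_sum fun x _ => by rw [← hs']; exact_mod_cast hd' x
    have h3 : ∑ x ∈ F, (temporalDist (profLab (Function.update s v t)) v x : ℝ≥0∞)
        ≤ (F.card : ℝ≥0∞) := by
      calc ∑ x ∈ F, (temporalDist (profLab (Function.update s v t)) v x : ℝ≥0∞)
          ≤ ∑ _x ∈ F, (1 : ℝ≥0∞) := Finset.sum_le_sum fun x hx => by
            rw [← hs']; exact hdF x hx
        _ = (F.card : ℝ≥0∞) := by simp
    calc ENNReal.ofReal α * (t.card : ℝ≥0∞) + (_ + _)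
        ≤ (ENNReal.ofReal α * ((s v).card : ℝ≥0∞) + ENNReal.ofReal α * (F.card : ℝ≥0∞))
          + (∑ x ∈ G, (temporalDist (profLab s) v x : ℝ≥0∞) + (F.card : ℝ≥0∞)) :=
          add_le_add h1 (add_le_add h2 h3)
      _ = (ENNReal.ofReal α * ((s v).card : ℝ≥0∞)
            + ∑ x ∈ G, (temporalDist (profLab s) v x : ℝ≥0∞))
          + (ENNReal.ofReal α + 1) * (F.card : ℝ≥0∞) := by ring
  have hkey : ∑ x ∈ F, (temporalDist (profLab s) v x : ℝ≥0∞)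
      ≤ (ENNReal.ofReal α + 1) * (F.card : ℝ≥0∞) := by
    have hC : ENNReal.ofReal α * ((s v).card : ℝ≥0∞)
        + ∑ x ∈ G, (temporalDist (profLab s) v x : ℝ≥0∞) ≠ ⊤ :=
      ENNReal.add_ne_top.mpr ⟨ENNReal.mul_ne_top ENNReal.ofReal_ne_top
        (ENNReal.natCast_ne_top _), hGne⟩
    have := le_trans hNash hRHS
    rw [← add_assoc] at this
    exact (ENNReal.add_le_add_iff_left hC).mp this
  have hlow : (3 : ℝ≥0∞) * (F.card : ℝ≥0∞)
      ≤ ∑ x ∈ F, (temporalDist (profLab s) v x : ℝ≥0∞) := by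
    calc (3 : ℝ≥0∞) * (F.card : ℝ≥0∞) = ∑ _x ∈ F, (3 : ℝ≥0∞) := by
          simp [mul_comm]
      _ ≤ _ := Finset.sum_le_sum fun x hx => by
          have hx2 : ¬ temporalDist (profLab s) v x ≤ 2 := (Finset.mem_filter.mp hx).2
          have h3 : (3 : ℕ∞) ≤ temporalDist (profLab s) v x := by
            have := not_le.mp hx2
            exact (ENat.add_one_le_iff (by norm_num)).mpr this
          exact_mod_cast h3
  have hFcard : (F.card : ℝ≥0∞) ≠ 0 := by
    have : 0 < F.card := Finset.card_pos.mpr ⟨w, hwF⟩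
    exact_mod_cast this.ne'
  have hαlt : ENNReal.ofReal α + 1 < 3 := by
    have h2 : ENNReal.ofReal α < 2 := by
      calc ENNReal.ofReal α < ENNReal.ofReal 2 :=
            (ENNReal.ofReal_lt_ofReal_iff (by norm_num)).mpr hα2
        _ = 2 := by norm_num [ENNReal.ofReal_ofNat]
    calc ENNReal.ofReal α + 1 < 2 + 1 := by
          exact ENNReal.add_lt_add_right (by norm_num) h2
      _ = 3 := by norm_num
  have : (3 : ℝ≥0∞) * (F.card : ℝ≥0∞) < 3 * (F.card : ℝ≥0∞) := by
    calc (3 : ℝ≥0∞) * (F.card : ℝ≥0∞) ≤ (ENNReal.ofReal α + 1) * (F.card : ℝ≥0∞) :=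
          le_trans hlow hkey
      _ < 3 * (F.card : ℝ≥0∞) := by
          rw [ENNReal.mul_lt_mul_iff_left hFcard (ENNReal.natCast_ne_top _)]
          exact hαlt
  exact absurd this (lt_irrefl _)

lemma nash_aux {α : ℝ} (hα : 0 < α) {n : ℕ} {s : Fin n → Finset (Fin n × ℕ)}
    (hN : IsNash α s) (hfin : ∀ v w : Fin n, temporalDist (profLab s) v w ≤ 2)
    {u v : Fin n} (huv : u ≠ v) {t1 t2 : ℕ} (h1 : t1 ∈ profLab s u v) (h12 : t1 < t2)
    (h2 : (v, t2) ∈ s u) : False := by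
  classical
  set t : Finset (Fin n × ℕ) := (s u).erase (v, t2) with ht
  have hd : ∀ x, temporalDist (profLab (Function.update s u t)) u x
      ≤ temporalDist (profLab s) u x := surgery huv h1 h12
  have hNash : indivCost α s u ≤ indivCost α (Function.update s u t) u := not_lt.mp (hN u t)
  have hcard : t.card + 1 = (s u).card := by
    rw [ht, Finset.card_erase_of_mem h2]
    have : 1 ≤ (s u).card := Finset.card_pos.mpr ⟨_, h2⟩
    omega
  have hsum : ∑ x : Fin n, (temporalDist (profLab (Function.update s u t)) u x : ℝ≥0∞)
      ≤ ∑ x : Fin n, (temporalDist (profLab s) u x : ℝ≥0∞) :=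
    Finset.sum_le_sum fun x _ => by exact_mod_cast hd x
  have hfin2 : ∑ x : Fin n, (temporalDist (profLab s) u x : ℝ≥0∞) ≠ ⊤ := by
    have hle : ∑ x : Fin n, (temporalDist (profLab s) u x : ℝ≥0∞)
        ≤ ∑ _x : Fin n, (2 : ℝ≥0∞) :=
      Finset.sum_le_sum fun x _ => by exact_mod_cast hfin u x
    exact ne_top_of_le_ne_top (ENNReal.sum_lt_top.mpr (fun _ _ => by norm_num)).ne hle
  have hitop : indivCost α s u ≠ ⊤ := by
    rw [indivCost]
    exact ENNReal.add_ne_top.mpr ⟨ENNReal.mul_ne_top ENNReal.ofReal_ne_top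
      (ENNReal.natCast_ne_top _), hfin2⟩
  have hstep : indivCost α (Function.update s u t) u + ENNReal.ofReal α ≤ indivCost α s u := by
    rw [indivCost, indivCost, Function.update_self]
    calc ENNReal.ofReal α * (t.card : ℝ≥0∞)
          + ∑ x : Fin n, (temporalDist (profLab (Function.update s u t)) u x : ℝ≥0∞)
          + ENNReal.ofReal α
        = ENNReal.ofReal α * ((t.card : ℝ≥0∞) + 1)
          + ∑ x : Fin n, (temporalDist (profLab (Function.update s u t)) u x : ℝ≥0∞) := by
          ring
      _ = ENNReal.ofReal α * (((s u).card : ℝ≥0∞))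
          + ∑ x : Fin n, (temporalDist (profLab (Function.update s u t)) u x : ℝ≥0∞) := by
          congr 1
          congr 1
          exact_mod_cast congrArg (Nat.cast (R := ℝ≥0∞)) hcard
      _ ≤ ENNReal.ofReal α * (((s u).card : ℝ≥0∞))
          + ∑ x : Fin n, (temporalDist (profLab s) u x : ℝ≥0∞) := add_le_add_right hsum _
  have hfinal : indivCost α s u + ENNReal.ofReal α ≤ indivCost α s u + 0 := by
    rw [add_zero]
    calc indivCost α s u + ENNReal.ofReal α
        ≤ indivCost α (Function.update s u t) u + ENNReal.ofReal α :=
          add_le_add_left hNash _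
      _ ≤ indivCost α s u := hstep
  have := (ENNReal.add_le_add_iff_left hitop).mp hfinal
  rw [le_zero_iff] at this
  exact (ENNReal.ofReal_pos.mpr hα).ne' this

lemma nash_card_le_one {α : ℝ} (hα1 : 1 ≤ α) (hα2 : α < 2) {n : ℕ}
    {s : Fin n → Finset (Fin n × ℕ)} (hN : IsNash α s) {u v : Fin n} (huv : u ≠ v) :
    (labelFinset s u v).card ≤ 1 := by
  by_contra hc
  obtain ⟨a, ha, b, hb, hab⟩ := Finset.one_lt_card.mp (not_le.mp hc)
  have hfin := nash_dist_le_two hα1 hα2 hN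
  have hα : 0 < α := lt_of_lt_of_le one_pos hα1
  have key : ∀ t1 t2 : ℕ, t1 ∈ labelFinset s u v → t2 ∈ labelFinset s u v → t1 < t2 → False := by
    intro t1 t2 ht1 ht2 h12
    have ht1' : t1 ∈ profLab s u v := mem_labelFinset.mp ht1
    rcases mem_labelFinset.mp ht2 with h | h
    · -- (u, t2) ∈ s v : roles of u, v swapped
      exact nash_aux hα hN hfin huv.symm (by rw [profLab_symm]; exact ht1') h12 h
    · exact nash_aux hα hN hfin huv ht1' h12 h
  rcases hab.lt_or_gt with h | h
  · exact key a b ha hb h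
  · exact key b a hb ha h

lemma sK_cost_ne_top (α : ℝ) (n : ℕ) : socialCost α (sK n) ≠ ⊤ := by
  rw [socialCost]
  refine ENNReal.add_ne_top.mpr ⟨ENNReal.mul_ne_top ENNReal.ofReal_ne_top
    (ENNReal.natCast_ne_top _), ?_⟩
  refine (ENNReal.sum_lt_top.mpr fun u _ => ENNReal.sum_lt_top.mpr fun v _ => ?_).ne
  by_cases h : u = v
  · subst h; rw [temporalDist_self]; simp
  · have h1 := temporalDist_le_one (lab := profLab (sK n)) h (mem_profLab_sK.mpr ⟨rfl, h⟩)
    have h2 : (temporalDist (profLab (sK n)) u v : ℝ≥0∞) ≤ 1 := by exact_mod_cast h1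
    exact lt_of_le_of_lt h2 (by norm_num)

lemma cost_upper {α : ℝ} (hα1 : 1 ≤ α) (hα2 : α < 2) {n : ℕ}
    {s : Fin n → Finset (Fin n × ℕ)} (hN : IsNash α s) :
    socialCost α s ≤ 4 * ((Pset n).card : ℝ≥0∞) := by
  classical
  have hdist := nash_dist_le_two hα1 hα2 hN
  rw [socialCost]
  have h1 : ENNReal.ofReal α * (numLabels s : ℝ≥0∞)
      ≤ ((∑ u : Fin n, ∑ v : Fin n, if u = v then 0 else (labelFinset s u v).card : ℕ) : ℝ≥0∞) := by
    have hα2' : ENNReal.ofReal α ≤ 2 := by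
      calc ENNReal.ofReal α ≤ ENNReal.ofReal 2 := ENNReal.ofReal_le_ofReal hα2.le
        _ = 2 := by norm_num [ENNReal.ofReal_ofNat]
    calc ENNReal.ofReal α * (numLabels s : ℝ≥0∞) ≤ 2 * (numLabels s : ℝ≥0∞) :=
          mul_le_mul_left hα2' _
      _ = ((2 * numLabels s : ℕ) : ℝ≥0∞) := by push_cast; ring
      _ ≤ _ := by
          have h : 2 * numLabels s
              ≤ ∑ u : Fin n, ∑ v : Fin n, if u = v then 0 else (labelFinset s u v).card := by
            rw [numLabels, mul_comm]
            exact Nat.div_mul_le_self _ 2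
          exact_mod_cast h
  calc ENNReal.ofReal α * (numLabels s : ℝ≥0∞)
        + ∑ u : Fin n, ∑ v : Fin n, (temporalDist (profLab s) u v : ℝ≥0∞)
      ≤ ((∑ u : Fin n, ∑ v : Fin n, if u = v then 0 else (labelFinset s u v).card : ℕ) : ℝ≥0∞)
        + ∑ u : Fin n, ∑ v : Fin n, (temporalDist (profLab s) u v : ℝ≥0∞) :=
        add_le_add_left h1 _
    _ = ∑ u : Fin n, ∑ v : Fin n,
        (((if u = v then 0 else (labelFinset s u v).card : ℕ) : ℝ≥0∞)
          + (temporalDist (profLab s) u v : ℝ≥0∞)) := by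
        rw [Nat.cast_sum, ← Finset.sum_add_distrib]
        refine Finset.sum_congr rfl fun u _ => ?_
        rw [Nat.cast_sum, ← Finset.sum_add_distrib]
    _ ≤ ∑ u : Fin n, ∑ v : Fin n, (if u = v then (0:ℝ≥0∞) else 2) := by
        refine Finset.sum_le_sum fun u _ => Finset.sum_le_sum fun v _ => ?_
        by_cases h : u = v
        · subst h
          simp [temporalDist_self]
        · rw [if_neg h, if_neg h]
          by_cases hne : (labelFinset s u v).Nonempty
          · obtain ⟨τ, hτ⟩ := hne
            have d1 : temporalDist (profLab s) u v ≤ 1 :=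
              temporalDist_le_one h (mem_labelFinset.mp hτ)
            have c1 : (labelFinset s u v).card ≤ 1 := nash_card_le_one hα1 hα2 hN h
            calc ((labelFinset s u v).card : ℝ≥0∞)
                  + (temporalDist (profLab s) u v : ℝ≥0∞) ≤ 1 + 1 := by
                  refine add_le_add ?_ ?_
                  · exact_mod_cast c1
                  · exact_mod_cast d1
              _ = 2 := by norm_num
          · rw [Finset.not_nonempty_iff_eq_empty] at hne
            rw [hne]
            simp only [Finset.card_empty, Nat.cast_zero, zero_add]
            exact_mod_cast hdist u v
    _ = (∑ p ∈ Pset n, (if p.1 = p.2 then (0:ℝ≥0∞) else 2))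
        + ∑ p ∈ Pset n, (if p.1 = p.2 then (0:ℝ≥0∞) else 2) :=
        pair_sum _ (fun u v => if_congr eq_comm rfl rfl) (fun u => by simp)
    _ = 4 * ((Pset n).card : ℝ≥0∞) := by
        have heval : ∀ p ∈ Pset n, (if p.1 = p.2 then (0:ℝ≥0∞) else 2) = 2 := by
          intro p hp
          rw [if_neg (Finset.mem_filter.mp hp).2.ne]
        rw [Finset.sum_congr rfl heval, Finset.sum_const, nsmul_eq_mul]
        ring

lemma cost_lower (α : ℝ) (hα1 : 1 ≤ α) {n : ℕ} (s : Fin n → Finset (Fin n × ℕ)) :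
    3 * ((Pset n).card : ℝ≥0∞) ≤ socialCost α s := by
  classical
  have hdlb : ∀ u v : Fin n,
      (((if u = v then 0 else (if (labelFinset s u v).Nonempty then 1 else 2) : ℕ)) : ℝ≥0∞)
      ≤ (temporalDist (profLab s) u v : ℝ≥0∞) := by
    intro u v
    by_cases h : u = v
    · subst h; simp
    · rw [if_neg h]
      by_cases hne : (labelFinset s u v).Nonempty
      · rw [if_pos hne]
        have h1 := one_le_temporalDist (lab := profLab s) h
        exact_mod_cast h1
      · rw [if_neg hne]
        have hno : ∀ τ : ℕ, τ ∉ profLab s u v := fun τ hτ =>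
          hne ⟨τ, mem_labelFinset.mpr hτ⟩
        have h2 := two_le_temporalDist h hno
        exact_mod_cast h2
  have e1 : (∑ u : Fin n, ∑ v : Fin n, if u = v then 0 else (labelFinset s u v).card)
      = (∑ p ∈ Pset n, if p.1 = p.2 then 0 else (labelFinset s p.1 p.2).card)
        + ∑ p ∈ Pset n, (if p.1 = p.2 then 0 else (labelFinset s p.1 p.2).card) :=
    pair_sum (fun u v => if u = v then 0 else (labelFinset s u v).card)
      (fun u v => by
        show (if u = v then 0 else (labelFinset s u v).card)
            = (if v = u then 0 else (labelFinset s v u).card)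
        rw [labelFinset_symm]
        exact if_congr eq_comm rfl rfl)
      (fun u => by simp)
  have e2 : (∑ u : Fin n, ∑ v : Fin n,
        (if u = v then 0 else (if (labelFinset s u v).Nonempty then 1 else 2)))
      = (∑ p ∈ Pset n, (if p.1 = p.2 then 0 else (if (labelFinset s p.1 p.2).Nonempty then 1 else 2)))
        + ∑ p ∈ Pset n, (if p.1 = p.2 then 0 else (if (labelFinset s p.1 p.2).Nonempty then 1 else 2)) :=
    pair_sum (fun u v => if u = v then 0 else (if (labelFinset s u v).Nonempty then 1 else 2))
      (fun u v => by
        show (if u = v then 0 else (if (labelFinset s u v).Nonempty then 1 else 2))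
            = (if v = u then 0 else (if (labelFinset s v u).Nonempty then 1 else 2))
        rw [labelFinset_symm]
        exact if_congr eq_comm rfl rfl)
      (fun u => by simp)
  have hL : numLabels s
      = ∑ p ∈ Pset n, (if p.1 = p.2 then 0 else (labelFinset s p.1 p.2).card) := by
    rw [numLabels, e1, ← two_mul, Nat.mul_div_cancel_left _ (by norm_num : 0 < 2)]
  have hnat : 3 * (Pset n).card ≤ numLabels s + ∑ u : Fin n, ∑ v : Fin n,
      (if u = v then 0 else (if (labelFinset s u v).Nonempty then 1 else 2)) := by
    rw [hL, e2]
    calc 3 * (Pset n).card = ∑ _p ∈ Pset n, 3 := by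
          rw [Finset.sum_const, smul_eq_mul, mul_comm]
      _ ≤ _ := by
          rw [← Finset.sum_add_distrib, ← Finset.sum_add_distrib]
          refine Finset.sum_le_sum fun p hp => ?_
          have hne : p.1 ≠ p.2 := (Finset.mem_filter.mp hp).2.ne
          by_cases hno : (labelFinset s p.1 p.2).Nonempty
          · have hcc : 1 ≤ (labelFinset s p.1 p.2).card := Finset.card_pos.mpr hno
            rw [if_neg hne, if_neg hne, if_pos hno]
            omega
          · rw [if_neg hne, if_neg hne, if_neg hno]
            omega
  rw [socialCost]
  calc 3 * ((Pset n).card : ℝ≥0∞) = ((3 * (Pset n).card : ℕ) : ℝ≥0∞) := by push_cast; ring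
    _ ≤ ((numLabels s + ∑ u : Fin n, ∑ v : Fin n,
          (if u = v then 0 else (if (labelFinset s u v).Nonempty then 1 else 2)) : ℕ) : ℝ≥0∞) := by
        exact_mod_cast hnat
    _ = (numLabels s : ℝ≥0∞) + ((∑ u : Fin n, ∑ v : Fin n,
          (if u = v then 0 else (if (labelFinset s u v).Nonempty then 1 else 2)) : ℕ) : ℝ≥0∞) := by
        push_cast; rfl
    _ ≤ ENNReal.ofReal α * (numLabels s : ℝ≥0∞)
        + ∑ u : Fin n, ∑ v : Fin n, (temporalDist (profLab s) u v : ℝ≥0∞) := by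
        refine add_le_add ?_ ?_
        · calc (numLabels s : ℝ≥0∞) = 1 * (numLabels s : ℝ≥0∞) := (one_mul _).symm
            _ ≤ ENNReal.ofReal α * (numLabels s : ℝ≥0∞) :=
              mul_le_mul_left (ENNReal.one_le_ofReal.mpr hα1) _
        · rw [Nat.cast_sum]
          refine Finset.sum_le_sum fun u _ => ?_
          rw [Nat.cast_sum]
          refine Finset.sum_le_sum fun v _ => ?_
          exact hdlb u v

set_option maxHeartbeats 1000000 in
/-- For every atomic cost `1 ≤ α < 2` and every number of players `n ≥ 2`, we have
`1 ≤ PoS(α, n) ≤ PoA(α, n) ≤ 4/3`. -/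
theorem statement_2 (α : ℝ) (hα1 : 1 ≤ α) (hα2 : α < 2) (n : ℕ) (hn : 2 ≤ n) :
    1 ≤ PoS α n ∧ PoS α n ≤ PoA α n ∧ PoA α n ≤ 4 / 3 := by
  classical
  have hα0 : (0:ℝ) ≤ α := le_trans zero_le_one hα1
  have hKpos : 0 < (Pset n).card := by
    refine Finset.card_pos.mpr ⟨(⟨0, by omega⟩, ⟨1, by omega⟩), ?_⟩
    rw [Pset, Finset.mem_filter]
    exact ⟨Finset.mem_univ _, by simp [Fin.mk_lt_mk]⟩
  have hopt_low : 3 * ((Pset n).card : ℝ≥0∞) ≤ optCost α n :=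
    le_iInf fun s => cost_lower α hα1 s
  have hopt_up : optCost α n ≤ socialCost α (sK n) := iInf_le _ _
  have hopt_ne_top : optCost α n ≠ ⊤ := ne_top_of_le_ne_top (sK_cost_ne_top α n) hopt_up
  have hopt_ne : optCost α n ≠ 0 := by
    intro h
    rw [h, le_zero_iff] at hopt_low
    have : ((Pset n).card : ℝ≥0∞) ≠ 0 := by exact_mod_cast hKpos.ne'
    exact this (by
      rcases mul_eq_zero.mp hopt_low with h3 | h3
      · norm_num at h3
      · exact h3)
  have hnash : IsNash α (sK n) := sK_nash hα0 n
  have hinf_ge : optCost α n ≤ ⨅ s : {s : Fin n → Finset (Fin n × ℕ) // IsNash α s},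
      socialCost α s.1 := le_iInf fun s => iInf_le _ s.1
  refine ⟨?_, ?_, ?_⟩
  · rw [PoS, ENNReal.le_div_iff_mul_le (Or.inl hopt_ne) (Or.inl hopt_ne_top), one_mul]
    exact hinf_ge
  · rw [PoS, PoA]
    refine ENNReal.div_le_div ?_ le_rfl
    have w : {s : Fin n → Finset (Fin n × ℕ) // IsNash α s} := ⟨sK n, hnash⟩
    exact le_trans (iInf_le _ w)
      (le_iSup (fun s : {s : Fin n → Finset (Fin n × ℕ) // IsNash α s} => socialCost α s.1) w)
  · rw [PoA]
    have hsup : (⨆ s : {s : Fin n → Finset (Fin n × ℕ) // IsNash α s}, socialCost α s.1)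
        ≤ 4 * ((Pset n).card : ℝ≥0∞) := iSup_le fun s => cost_upper hα1 hα2 s.2
    calc (⨆ s : {s : Fin n → Finset (Fin n × ℕ) // IsNash α s}, socialCost α s.1) / optCost α n
        ≤ (4 * ((Pset n).card : ℝ≥0∞)) / (3 * ((Pset n).card : ℝ≥0∞)) :=
          ENNReal.div_le_div hsup hopt_low
      _ = 4 / 3 := ENNReal.mul_div_mul_right 4 3 (by exact_mod_cast hKpos.ne')
          (ENNReal.natCast_ne_top _)
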